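/- Let M ⊆ ℝ² be a staircase connected set which is the closure of its bounded and connected interior. A point a ∈ M is an s-extreme point of M if and only if hw_a(M) = 0 or vw_a(M) = 0. -/

import Mathlib

open Set MeasureTheory Bornology
open scoped ENNReal

noncomputable section

/-- `ℝ^d` as Euclidean space. -/
abbrev EucR (d : ℕ) := EuclideanSpace ℝ (Fin d)

/-- The segment from `x` to `y` is parallel to a coordinate axis
(all coordinates except possibly one agree). -/
def IsOrthSeg {d : ℕ} (x y : EucR d) : Prop :=
  ∃ i : Fin d, ∀ j, j ≠ i → x j = y j

/-- `p 0, p 1, …, p n` is an orthogonal polygonal path contained in `S`. -/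
def IsOrthPathIn {d : ℕ} (S : Set (EucR d)) (p : ℕ → EucR d) (n : ℕ) : Prop :=
  ∀ k, k < n → IsOrthSeg (p k) (p (k + 1)) ∧ segment ℝ (p k) (p (k + 1)) ⊆ S

/-- `S` is orthogonally connected. -/
def OrthConnected {d : ℕ} (S : Set (EucR d)) : Prop :=
  ∀ x ∈ S, ∀ y ∈ S, ∃ n : ℕ, ∃ p : ℕ → EucR d,
    p 0 = x ∧ p n = y ∧ IsOrthPathIn S p n

/-- An orthogonal path is a staircase if all edges parallel to the same axis
point in the same direction. -/
def IsStaircaseIn {d : ℕ} (S : Set (EucR d)) (p : ℕ → EucR d) (n : ℕ) : Prop :=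
  IsOrthPathIn S p n ∧
    ∀ k, k < n → ∀ l, l < n → ∀ i : Fin d,
      (∀ j, j ≠ i → p k j = p (k + 1) j) → (∀ j, j ≠ i → p l j = p (l + 1) j) →
        0 ≤ (p (k + 1) i - p k i) * (p (l + 1) i - p l i)

/-- `S` is staircase connected. -/
def StaircaseConnected {d : ℕ} (S : Set (EucR d)) : Prop :=
  ∀ x ∈ S, ∀ y ∈ S, ∃ n : ℕ, ∃ p : ℕ → EucR d,
    p 0 = x ∧ p n = y ∧ IsStaircaseIn S p n

/-- `S` is orthogonally convex. -/
def OrthConvex {d : ℕ} (S : Set (EucR d)) : Prop :=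
  ∀ x ∈ S, ∀ y ∈ S, IsOrthSeg x y → segment ℝ x y ⊆ S

/-- A convex body: compact convex with nonempty interior. -/
def IsConvexBody {d : ℕ} (K : Set (EucR d)) : Prop :=
  Convex ℝ K ∧ IsCompact K ∧ (interior K).Nonempty

/-- The point of `ℝ²` with coordinates `(a, b)`. -/
def pt2 (a b : ℝ) : EucR 2 := (WithLp.equiv 2 (Fin 2 → ℝ)).symm ![a, b]

/-- Horizontal width of `S` at `x`: the length of the connected component
containing `x` of the intersection of `S` with the horizontal line through `x`. -/
def hw (S : Set (EucR 2)) (x : EucR 2) : ℝ≥0∞ :=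
  volume (connectedComponentIn {t : ℝ | pt2 t (x 1) ∈ S} (x 0))

/-- Vertical width of `S` at `x`. -/
def vw (S : Set (EucR 2)) (x : EucR 2) : ℝ≥0∞ :=
  volume (connectedComponentIn {t : ℝ | pt2 (x 0) t ∈ S} (x 1))

/-- The set of unit directions from `x` towards points of `K`. -/
def dirSet (x : EucR 2) (K : Set (EucR 2)) : Set (EucR 2) :=
  {u | ∃ y ∈ K, y ≠ x ∧ u = ‖y - x‖⁻¹ • (y - x)}

/-- `α_x(K)`: the angular (1-dimensional Hausdorff) measure of the set of unit
directions from `x` towards other points of `K`. -/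
def angMeasure (x : EucR 2) (K : Set (EucR 2)) : ℝ≥0∞ :=
  μH[1] (dirSet x K)

/-- The half-line from `x` through `y`. -/
def rayFrom (x y : EucR 2) : Set (EucR 2) := {z | ∃ t : ℝ, 0 ≤ t ∧ z = x + t • (y - x)}

/-- `T_x(K)`: the union of the half-lines from `x` through the points of `K \ {x}`. -/
def TCone (x : EucR 2) (K : Set (EucR 2)) : Set (EucR 2) := ⋃ y ∈ K \ {x}, rayFrom x y

/-- `K` is obtuse: at every boundary point `x`, either `α_x(K) > π/2`, or
`α_x(K) = π/2` and `T_x(K) \ {x}` is not open. -/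
def Obtuse (K : Set (EucR 2)) : Prop :=
  ∀ x ∈ frontier K,
    ENNReal.ofReal (Real.pi / 2) < angMeasure x K ∨
      (angMeasure x K = ENNReal.ofReal (Real.pi / 2) ∧ ¬ IsOpen (TCone x K \ {x}))

/-- Inclusion of `ℝ² × ℝ` into `ℝ³`. -/
def incl3 (q : EucR 2) (t : ℝ) : EucR 3 := (WithLp.equiv 2 (Fin 3 → ℝ)).symm ![q 0, q 1, t]

/-- A piece of a continuum `C`: the closure of a connected component of
`C \ {x}` for some cut point `x` of `C`. -/
def IsPiece (C P : Set (EucR 2)) : Prop :=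
  ∃ x ∈ C, ¬ IsPreconnected (C \ {x}) ∧
    ∃ y ∈ C \ {x}, P = closure (connectedComponentIn (C \ {x}) y)

/-- `f` is unimodal on `[a,b]`: non-decreasing on `[a,c]`, non-increasing on `[c,b]`
for some `c ∈ (a,b)`. -/
def Unimodal (f : ℝ → ℝ) (a b : ℝ) : Prop :=
  ∃ c ∈ Ioo a b, MonotoneOn f (Icc a c) ∧ AntitoneOn f (Icc c b)

/-- `a` is an s-extreme point of `M`: it belongs to a staircase in `M` only as an
endpoint. -/
def SExtreme (M : Set (EucR 2)) (a : EucR 2) : Prop :=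
  a ∈ M ∧ ∀ n : ℕ, ∀ γ : ℕ → EucR 2, IsStaircaseIn M γ n →
    a ∈ ⋃ k ∈ Set.Iio n, segment ℝ (γ k) (γ (k + 1)) → a = γ 0 ∨ a = γ n

/-- `M ⊆ ℝ²` is a strip: the preimage of an interval of `ℝ` under a nonzero
linear functional (this includes half-planes and the whole plane). -/
def IsStrip (M : Set (EucR 2)) : Prop :=
  ∃ f : EucR 2 →ₗ[ℝ] ℝ, f ≠ 0 ∧ ∃ I : Set ℝ, I.OrdConnected ∧ M = f ⁻¹' I

end

section Aux

open Classical in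
lemma pt2_apply (x y : ℝ) (j : Fin 2) : pt2 x y j = ![x, y] j := by
  simp [pt2, WithLp.equiv_symm_apply]

lemma pt2_zero (x y : ℝ) : pt2 x y 0 = x := by simp [pt2_apply]
lemma pt2_one (x y : ℝ) : pt2 x y 1 = y := by simp [pt2_apply]

lemma fin2cases (j : Fin 2) : j = 0 ∨ j = 1 := by revert j; decide

lemma pt2_eta (a : EucR 2) : pt2 (a 0) (a 1) = a := by
  ext j
  rcases fin2cases j with h | h <;> subst h <;> simp [pt2_apply]

lemma stair_const {d : ℕ} {M : Set (EucR d)} {γ : ℕ → EucR d} {n : ℕ}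
    (h : IsStaircaseIn M γ n) (j : Fin d) (hj : γ n j = γ 0 j) :
    ∀ k, k ≤ n → γ k j = γ 0 j := by
  set dd : ℕ → ℝ := fun k => γ (k + 1) j - γ k j with hdd
  have hwit : ∀ k, k < n → dd k ≠ 0 → ∀ j', j' ≠ j → γ k j' = γ (k + 1) j' := by
    intro k hk hne j' hj'
    obtain ⟨i, hi⟩ := (h.1 k hk).1
    rcases eq_or_ne j i with rfl | hji
    · exact hi j' hj'
    · exact absurd (sub_eq_zero.2 (hi j hji).symm) hne
  have hsum : ∑ k ∈ Finset.range n, dd k = 0 := by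
    rw [hdd]
    rw [Finset.sum_range_sub (f := fun k => γ k j)]
    rw [hj]; ring
  have hzero : ∀ k, k < n → dd k = 0 := by
    by_contra hcon
    push_neg at hcon
    obtain ⟨k0, hk0, hk0ne⟩ := hcon
    rcases lt_or_gt_of_ne hk0ne with hneg | hpos
    · have hle : ∀ k ∈ Finset.range n, dd k ≤ 0 := by
        intro k hk
        rw [Finset.mem_range] at hk
        rcases eq_or_ne (dd k) 0 with h0 | hne
        · exact le_of_eq h0
        · have h2 := h.2 k hk k0 hk0 j (hwit k hk hne) (hwit k0 hk0 hk0ne)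
          have e1 : dd k = γ (k + 1) j - γ k j := rfl
          have e2 : dd k0 = γ (k0 + 1) j - γ k0 j := rfl
          nlinarith [h2, e1, e2]
      have := (Finset.sum_eq_zero_iff_of_nonpos hle).1 hsum k0 (Finset.mem_range.2 hk0)
      exact hk0ne this
    · have hle : ∀ k ∈ Finset.range n, 0 ≤ dd k := by
        intro k hk
        rw [Finset.mem_range] at hk
        rcases eq_or_ne (dd k) 0 with h0 | hne
        · exact ge_of_eq h0
        · have h2 := h.2 k hk k0 hk0 j (hwit k hk hne) (hwit k0 hk0 hk0ne)
          have e1 : dd k = γ (k + 1) j - γ k j := rfl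
          have e2 : dd k0 = γ (k0 + 1) j - γ k0 j := rfl
          nlinarith [h2, e1, e2]
      have := (Finset.sum_eq_zero_iff_of_nonneg hle).1 hsum k0 (Finset.mem_range.2 hk0)
      exact hk0ne this
  intro k hk
  induction k with
  | zero => rfl
  | succ m ih =>
      have hm : m < n := by omega
      have h1 := hzero m hm
      have h2 : γ (m + 1) j = γ m j := by
        have : γ (m + 1) j - γ m j = 0 := h1
        linarith
      rw [h2, ih (by omega)]

lemma uIcc_cover (f : ℕ → ℝ) (n : ℕ) :
    ∀ u ∈ Set.uIcc (f 0) (f (n + 1)), ∃ k ≤ n, u ∈ Set.uIcc (f k) (f (k + 1)) := by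
  induction n with
  | zero => exact fun u hu => ⟨0, le_refl 0, hu⟩
  | succ m ih =>
      intro u hu
      rcases uIcc_subset_uIcc_union_uIcc (b := f (m + 1)) hu with h | h
      · obtain ⟨k, hk, hk2⟩ := ih u h
        exact ⟨k, by omega, hk2⟩
      · exact ⟨m + 1, le_refl _, h⟩

lemma staircase_orthConvex {M : Set (EucR 2)} (hM : StaircaseConnected M) {c : Fin 2}
    {x z : EucR 2} (hx : x ∈ M) (hz : z ∈ M) (h : ∀ j, j ≠ c → x j = z j) :
    segment ℝ x z ⊆ M := by
  obtain ⟨n, γ, h0, hn, hst⟩ := hM x hx z hz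
  have hconst : ∀ j, j ≠ c → ∀ k, k ≤ n → γ k j = x j := by
    intro j hj k hk
    have := stair_const hst j (by rw [h0, hn]; exact (h j hj).symm) k hk
    rw [this, h0]
  rcases Nat.eq_zero_or_pos n with rfl | hnpos
  · have hxz : x = z := by rw [← h0, ← hn]
    rw [← hxz, segment_same]
    exact fun w hw => by rw [Set.mem_singleton_iff] at hw; rw [hw]; exact hx
  · obtain ⟨m, rfl⟩ : ∃ m, n = m + 1 := ⟨n - 1, by omega⟩
    intro w hw
    obtain ⟨t1, t2, ht1, ht2, hts, heq⟩ := hw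
    have hwc : w c ∈ Set.uIcc (x c) (z c) := by
      rw [← segment_eq_uIcc]
      exact ⟨t1, t2, ht1, ht2, hts, by rw [← heq]; simp [PiLp.add_apply, PiLp.smul_apply]⟩
    have hwc' : w c ∈ Set.uIcc (γ 0 c) (γ (m + 1) c) := by rwa [h0, hn]
    obtain ⟨k, hk, hk2⟩ := uIcc_cover (fun k => γ k c) m (w c) hwc'
    rw [← segment_eq_uIcc] at hk2
    obtain ⟨s1, s2, hs1, hs2, hss, hseq⟩ := hk2
    have hwe : w = s1 • γ k + s2 • γ (k + 1) := by
      ext j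
      rcases eq_or_ne j c with rfl | hj
      · rw [show (s1 • γ k + s2 • γ (k + 1)) j = s1 • γ k j + s2 • γ (k + 1) j from rfl]
        exact hseq.symm
      · have hxj : γ k j = x j := hconst j hj k (by omega)
        have hxj' : γ (k + 1) j = x j := hconst j hj (k + 1) (by omega)
        have hwj : w j = t1 • x j + t2 • z j := by rw [← heq]; rfl
        rw [show (s1 • γ k + s2 • γ (k + 1)) j = s1 • γ k j + s2 • γ (k + 1) j from rfl,
          hxj, hxj', hwj, ← h j hj]
        simp only [smul_eq_mul]
        linear_combination (x j) * hts - (x j) * hss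
    rw [hwe]
    exact (hst.1 k (by omega)).2 ⟨s1, s2, hs1, hs2, hss, rfl⟩

lemma hw_zero_slice {M : Set (EucR 2)} {a : EucR 2} (hM : StaircaseConnected M)
    (ha : a ∈ M) (h : hw M a = 0) : ∀ z ∈ M, z 1 = a 1 → z = a := by
  intro z hz hz1
  by_contra hne
  have hz0 : z 0 ≠ a 0 := by
    intro h0
    exact hne (by rw [← pt2_eta z, h0, hz1, pt2_eta])
  have hseg : segment ℝ a z ⊆ M :=
    staircase_orthConvex hM (c := 0) ha hz (by
      intro j hj
      rcases fin2cases j with rfl | rfl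
      · exact absurd rfl hj
      · exact hz1.symm)
  have hsub : Set.uIcc (a 0) (z 0) ⊆ {t : ℝ | pt2 t (a 1) ∈ M} := by
    intro u hu
    rw [← segment_eq_uIcc] at hu
    obtain ⟨t1, t2, ht1, ht2, hts, hteq⟩ := hu
    have hpe : pt2 u (a 1) = t1 • a + t2 • z := by
      ext j
      rcases fin2cases j with rfl | rfl
      · rw [show (t1 • a + t2 • z) 0 = t1 • a 0 + t2 • z 0 from rfl, pt2_zero]
        exact hteq.symm
      · rw [show (t1 • a + t2 • z) 1 = t1 • a 1 + t2 • z 1 from rfl, pt2_one, hz1]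
        simp only [smul_eq_mul]
        linear_combination (-(a 1)) * hts
    show pt2 u (a 1) ∈ M
    rw [hpe]
    exact hseg ⟨t1, t2, ht1, ht2, hts, rfl⟩
  have h2 := (isPreconnected_uIcc (a := a 0) (b := z 0)).subset_connectedComponentIn
    Set.left_mem_uIcc hsub
  have h3 : volume (Set.uIcc (a 0) (z 0)) = 0 := by
    have hle : volume (Set.uIcc (a 0) (z 0)) ≤
        volume (connectedComponentIn {t : ℝ | pt2 t (a 1) ∈ M} (a 0)) := measure_mono h2
    have h' : volume (connectedComponentIn {t : ℝ | pt2 t (a 1) ∈ M} (a 0)) = 0 := h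
    rw [h'] at hle
    exact le_zero_iff.1 hle
  rw [Real.volume_interval] at h3
  simp only [ENNReal.ofReal_eq_zero] at h3
  have := abs_nonneg (z 0 - a 0)
  have : |z 0 - a 0| = 0 := le_antisymm h3 this
  rw [abs_eq_zero, sub_eq_zero] at this
  exact hz0 this

lemma vw_zero_slice {M : Set (EucR 2)} {a : EucR 2} (hM : StaircaseConnected M)
    (ha : a ∈ M) (h : vw M a = 0) : ∀ z ∈ M, z 0 = a 0 → z = a := by
  intro z hz hz0
  by_contra hne
  have hz1 : z 1 ≠ a 1 := by
    intro h1
    exact hne (by rw [← pt2_eta z, h1, hz0, pt2_eta])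
  have hseg : segment ℝ a z ⊆ M :=
    staircase_orthConvex hM (c := 1) ha hz (by
      intro j hj
      rcases fin2cases j with rfl | rfl
      · exact hz0.symm
      · exact absurd rfl hj)
  have hsub : Set.uIcc (a 1) (z 1) ⊆ {t : ℝ | pt2 (a 0) t ∈ M} := by
    intro u hu
    rw [← segment_eq_uIcc] at hu
    obtain ⟨t1, t2, ht1, ht2, hts, hteq⟩ := hu
    have hpe : pt2 (a 0) u = t1 • a + t2 • z := by
      ext j
      rcases fin2cases j with rfl | rfl
      · rw [show (t1 • a + t2 • z) 0 = t1 • a 0 + t2 • z 0 from rfl, pt2_zero, hz0]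
        simp only [smul_eq_mul]
        linear_combination (-(a 0)) * hts
      · rw [show (t1 • a + t2 • z) 1 = t1 • a 1 + t2 • z 1 from rfl, pt2_one]
        exact hteq.symm
    show pt2 (a 0) u ∈ M
    rw [hpe]
    exact hseg ⟨t1, t2, ht1, ht2, hts, rfl⟩
  have h2 := (isPreconnected_uIcc (a := a 1) (b := z 1)).subset_connectedComponentIn
    Set.left_mem_uIcc hsub
  have h3 : volume (Set.uIcc (a 1) (z 1)) = 0 := by
    have hle : volume (Set.uIcc (a 1) (z 1)) ≤
        volume (connectedComponentIn {t : ℝ | pt2 (a 0) t ∈ M} (a 1)) := measure_mono h2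
    have h' : volume (connectedComponentIn {t : ℝ | pt2 (a 0) t ∈ M} (a 1)) = 0 := h
    rw [h'] at hle
    exact le_zero_iff.1 hle
  rw [Real.volume_interval] at h3
  simp only [ENNReal.ofReal_eq_zero] at h3
  have := abs_nonneg (z 1 - a 1)
  have : |z 1 - a 1| = 0 := le_antisymm h3 this
  rw [abs_eq_zero, sub_eq_zero] at this
  exact hz1 this

lemma hw_ne_zero_seg {M : Set (EucR 2)} {a : EucR 2} (hM : StaircaseConnected M)
    (ha : a ∈ M) (h : hw M a ≠ 0) :
    ∃ z ∈ M, z 1 = a 1 ∧ z ≠ a ∧ segment ℝ a z ⊆ M := by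
  have hex : ∃ t ∈ connectedComponentIn {t : ℝ | pt2 t (a 1) ∈ M} (a 0), t ≠ a 0 := by
    by_contra hcon
    push_neg at hcon
    have hsub : connectedComponentIn {t : ℝ | pt2 t (a 1) ∈ M} (a 0) ⊆ {a 0} :=
      fun t ht => hcon t ht
    have hvle : volume (connectedComponentIn {t : ℝ | pt2 t (a 1) ∈ M} (a 0)) ≤
        volume ({a 0} : Set ℝ) := measure_mono hsub
    rw [Real.volume_singleton] at hvle
    exact h (le_zero_iff.1 hvle)
  obtain ⟨t, ht, htne⟩ := hex
  have htS' : t ∈ {t : ℝ | pt2 t (a 1) ∈ M} :=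
    connectedComponentIn_subset {t : ℝ | pt2 t (a 1) ∈ M} (a 0) ht
  have htS : pt2 t (a 1) ∈ M := htS'
  refine ⟨pt2 t (a 1), htS, pt2_one _ _, ?_, ?_⟩
  · intro hcon
    exact htne (by rw [← pt2_zero t (a 1), hcon])
  · exact staircase_orthConvex hM (c := 0) ha htS (by
      intro j hj
      rcases fin2cases j with rfl | rfl
      · exact absurd rfl hj
      · rw [pt2_one])

lemma vw_ne_zero_seg {M : Set (EucR 2)} {a : EucR 2} (hM : StaircaseConnected M)
    (ha : a ∈ M) (h : vw M a ≠ 0) :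
    ∃ z ∈ M, z 0 = a 0 ∧ z ≠ a ∧ segment ℝ a z ⊆ M := by
  have hex : ∃ t ∈ connectedComponentIn {t : ℝ | pt2 (a 0) t ∈ M} (a 1), t ≠ a 1 := by
    by_contra hcon
    push_neg at hcon
    have hsub : connectedComponentIn {t : ℝ | pt2 (a 0) t ∈ M} (a 1) ⊆ {a 1} :=
      fun t ht => hcon t ht
    have hvle : volume (connectedComponentIn {t : ℝ | pt2 (a 0) t ∈ M} (a 1)) ≤
        volume ({a 1} : Set ℝ) := measure_mono hsub
    rw [Real.volume_singleton] at hvle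
    exact h (le_zero_iff.1 hvle)
  obtain ⟨t, ht, htne⟩ := hex
  have htS' : t ∈ {t : ℝ | pt2 (a 0) t ∈ M} :=
    connectedComponentIn_subset {t : ℝ | pt2 (a 0) t ∈ M} (a 1) ht
  have htS : pt2 (a 0) t ∈ M := htS'
  refine ⟨pt2 (a 0) t, htS, pt2_zero _ _, ?_, ?_⟩
  · intro hcon
    exact htne (by rw [← pt2_one (a 0) t, hcon])
  · exact staircase_orthConvex hM (c := 1) ha htS (by
      intro j hj
      rcases fin2cases j with rfl | rfl
      · rw [pt2_zero]
      · exact absurd rfl hj)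

lemma halfplane_gen {M : Set (EucR 2)} {a : EucR 2} (hcl : M = closure (interior M))
    (hU : IsPreconnected (interior M)) (c : Fin 2)
    (hsing : ∀ z ∈ M, z c = a c → z = a) :
    (∀ z ∈ M, z c ≤ a c) ∨ (∀ z ∈ M, a c ≤ z c) := by
  obtain ⟨dc, hd⟩ : ∃ d : Fin 2, d ≠ c :=
    ⟨if c = 0 then 1 else 0, by rcases fin2cases c with rfl | rfl <;> decide⟩
  have hproj : Continuous fun w : EucR 2 => w c := (EuclideanSpace.proj c).continuous
  have hne : ∀ u ∈ interior M, u c ≠ a c := by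
    intro u hu huc
    have hua : u = a := hsing u (interior_subset hu) huc
    rw [hua] at hu
    obtain ⟨ε, hε, hball⟩ := Metric.isOpen_iff.1 isOpen_interior a hu
    set z : EucR 2 := a + (ε / 2) • EuclideanSpace.single dc (1 : ℝ) with hzdef
    have hdist : dist z a = ε / 2 := by
      rw [dist_eq_norm, hzdef, add_sub_cancel_left, norm_smul,
        EuclideanSpace.norm_single]
      simp [Real.norm_eq_abs, abs_of_pos hε]
    have hzM : z ∈ M := interior_subset (hball (by rw [Metric.mem_ball, hdist]; linarith))
    have hzc : z c = a c := by
      rw [hzdef]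
      show a c + (ε / 2) • (EuclideanSpace.single dc (1 : ℝ)) c = a c
      rw [EuclideanSpace.single_apply, if_neg (Ne.symm hd)]
      simp
    have hza : z = a := hsing z hzM hzc
    have hzd : z dc = a dc + ε / 2 := by
      rw [hzdef]
      show a dc + (ε / 2) • (EuclideanSpace.single dc (1 : ℝ)) dc = a dc + ε / 2
      rw [EuclideanSpace.single_apply, if_pos rfl]
      simp
    rw [hza] at hzd
    linarith
  by_cases hpos : ∃ u ∈ interior M, a c < u c
  · right
    have hsub : interior M ⊆ {w : EucR 2 | a c ≤ w c} := by
      intro u hu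
      by_contra hlt
      simp only [Set.mem_setOf_eq, not_le] at hlt
      obtain ⟨v, hv, hvc⟩ := hpos
      have himg : IsPreconnected ((fun w : EucR 2 => w c) '' interior M) :=
        hU.image _ hproj.continuousOn
      have hmem : a c ∈ Set.uIcc (u c) (v c) :=
        Set.mem_uIcc.2 (Or.inl ⟨le_of_lt hlt, le_of_lt hvc⟩)
      obtain ⟨w, hw, hwc⟩ := himg.ordConnected.uIcc_subset ⟨u, hu, rfl⟩ ⟨v, hv, rfl⟩ hmem
      exact hne w hw hwc
    intro z hz
    rw [hcl] at hz
    exact closure_minimal hsub (isClosed_le continuous_const hproj) hz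
  · left
    push_neg at hpos
    intro z hz
    rw [hcl] at hz
    exact closure_minimal (fun u hu => hpos u hu) (isClosed_le hproj continuous_const) hz

lemma stair_endpoint {M : Set (EucR 2)} {a : EucR 2} (c : Fin 2) (σ : ℝ) (hσ : σ * σ = 1)
    (hsing : ∀ z ∈ M, z c = a c → z = a)
    (hhalf : ∀ z ∈ M, 0 ≤ σ * (z c - a c)) :
    ∀ n : ℕ, ∀ γ : ℕ → EucR 2, IsStaircaseIn M γ n →
      a ∈ ⋃ k ∈ Set.Iio n, segment ℝ (γ k) (γ (k + 1)) → a = γ 0 ∨ a = γ n := by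
  intro n γ hst hmem
  classical
  by_contra hcon
  push_neg at hcon
  obtain ⟨h0, hn⟩ := hcon
  simp only [Set.mem_iUnion, Set.mem_Iio, exists_prop] at hmem
  obtain ⟨k0, hk0, hk0m⟩ := hmem
  have hend : ∀ k, k < n → a ∈ segment ℝ (γ k) (γ (k + 1)) → a = γ k ∨ a = γ (k + 1) := by
    intro k hk hseg
    obtain ⟨t1, t2, ht1, ht2, hts, heq⟩ := hseg
    have hxM : γ k ∈ M := (hst.1 k hk).2 (left_mem_segment ℝ _ _)
    have hyM : γ (k + 1) ∈ M := (hst.1 k hk).2 (right_mem_segment ℝ _ _)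
    rcases eq_or_lt_of_le ht1 with h10 | h1p
    · right
      have ht2' : t2 = 1 := by linarith
      rw [← heq, ← h10, ht2']
      simp
    rcases eq_or_lt_of_le ht2 with h20 | h2p
    · left
      have ht1' : t1 = 1 := by linarith
      rw [← heq, ← h20, ht1']
      simp
    have hac : t1 * γ k c + t2 * γ (k + 1) c = a c := by
      rw [← heq]
      simp [PiLp.add_apply, PiLp.smul_apply]
    have hx := hhalf _ hxM
    have hy := hhalf _ hyM
    have key : t1 * (σ * (γ k c - a c)) + t2 * (σ * (γ (k + 1) c - a c)) = 0 := by
      linear_combination σ * hac - σ * (a c) * hts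
    have hle : σ * (γ k c - a c) ≤ 0 := by nlinarith [key, mul_nonneg ht2 hy, h1p]
    have e1 : σ * (γ k c - a c) = 0 := le_antisymm hle hx
    have hxc : γ k c = a c := by
      linear_combination σ * e1 - (γ k c - a c) * hσ
    left
    exact (hsing _ hxM hxc).symm
  set J : Finset ℕ := (Finset.range (n + 1)).filter (fun j => γ j = a) with hJ
  have hJne : J.Nonempty := by
    rcases hend k0 hk0 hk0m with h | h
    · exact ⟨k0, by
        simp only [hJ, Finset.mem_filter, Finset.mem_range]
        exact ⟨by omega, h.symm⟩⟩
    · exact ⟨k0 + 1, by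
        simp only [hJ, Finset.mem_filter, Finset.mem_range]
        exact ⟨by omega, h.symm⟩⟩
  set m := J.min' hJne with hm
  set l := J.max' hJne with hl
  have hmJ : m ∈ J := J.min'_mem hJne
  have hlJ : l ∈ J := J.max'_mem hJne
  rw [hJ, Finset.mem_filter, Finset.mem_range] at hmJ hlJ
  obtain ⟨hmn, hma⟩ := hmJ
  obtain ⟨hln, hla⟩ := hlJ
  have hm0 : m ≠ 0 := by
    intro hme
    rw [hme] at hma
    exact h0 hma.symm
  have hlnn : l ≠ n := by
    intro hle
    rw [hle] at hla
    exact hn hla.symm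
  have hm1 : m - 1 < n := by omega
  have hln' : l < n := by omega
  have hprev : γ (m - 1) ≠ a := by
    intro hpa
    have hmem' : m - 1 ∈ J := by
      rw [hJ, Finset.mem_filter, Finset.mem_range]
      exact ⟨by omega, hpa⟩
    have := J.min'_le _ hmem'
    omega
  have hnext : γ (l + 1) ≠ a := by
    intro hpa
    have hmem' : l + 1 ∈ J := by
      rw [hJ, Finset.mem_filter, Finset.mem_range]
      exact ⟨by omega, hpa⟩
    have := J.le_max' _ hmem'
    omega
  have hstep : m - 1 + 1 = m := by omega
  have hprevM : γ (m - 1) ∈ M := (hst.1 _ hm1).2 (left_mem_segment ℝ _ _)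
  have hnextM : γ (l + 1) ∈ M := (hst.1 _ hln').2 (right_mem_segment ℝ _ _)
  have hwit1 : ∀ j, j ≠ c → γ (m - 1) j = γ (m - 1 + 1) j := by
    obtain ⟨i, hi⟩ := (hst.1 _ hm1).1
    rcases eq_or_ne i c with rfl | hic
    · exact hi
    · exfalso
      have hcc := hi c (Ne.symm hic)
      rw [hstep, hma] at hcc
      exact hprev (hsing _ hprevM hcc)
  have hwit2 : ∀ j, j ≠ c → γ l j = γ (l + 1) j := by
    obtain ⟨i, hi⟩ := (hst.1 _ hln').1
    rcases eq_or_ne i c with rfl | hic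
    · exact hi
    · exfalso
      have hcc := hi c (Ne.symm hic)
      rw [hla] at hcc
      exact hnext (hsing _ hnextM hcc.symm)
  have hkey := hst.2 (m - 1) hm1 l hln' c hwit1 hwit2
  rw [hstep, hma, hla] at hkey
  have hu := hhalf _ hprevM
  have hv := hhalf _ hnextM
  have huz : σ * (γ (m - 1) c - a c) ≠ 0 := by
    intro hz
    apply hprev
    apply hsing _ hprevM
    linear_combination σ * hz - (γ (m - 1) c - a c) * hσ
  have hvz : σ * (γ (l + 1) c - a c) ≠ 0 := by
    intro hz
    apply hnext
    apply hsing _ hnextM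
    linear_combination σ * hz - (γ (l + 1) c - a c) * hσ
  have hu' : 0 < σ * (γ (m - 1) c - a c) := hu.lt_of_ne (Ne.symm huz)
  have hv' : 0 < σ * (γ (l + 1) c - a c) := hv.lt_of_ne (Ne.symm hvz)
  have hXeq : (σ * (γ (m - 1) c - a c)) * (σ * (γ (l + 1) c - a c)) =
      (γ (m - 1) c - a c) * (γ (l + 1) c - a c) := by
    linear_combination ((γ (m - 1) c - a c) * (γ (l + 1) c - a c)) * hσ
  have hXpos : 0 < (γ (m - 1) c - a c) * (γ (l + 1) c - a c) := by
    rw [← hXeq]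
    exact mul_pos hu' hv'
  nlinarith [hkey, hXpos]

end Aux

/-- Let `M ⊆ ℝ²` be staircase connected and the closure of its bounded connected
interior. A point `a ∈ M` is s-extreme iff `hw_a(M) = 0` or `vw_a(M) = 0`. -/
theorem sExtreme_iff_width_zero (M : Set (EucR 2)) (hM : StaircaseConnected M)
    (hcl : M = closure (interior M)) (hbd : IsBounded (interior M))
    (hconn : IsConnected (interior M)) :
    ∀ a ∈ M, (SExtreme M a ↔ (hw M a = 0 ∨ vw M a = 0)) := by
  intro a ha
  constructor
  · intro hSE
    by_contra hcon
    push_neg at hcon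
    obtain ⟨hhw, hvw⟩ := hcon
    obtain ⟨b, hbM, hb1, hbne, hbseg⟩ := hw_ne_zero_seg hM ha hhw
    obtain ⟨cc, hcM, hc0, hcne, hcseg⟩ := vw_ne_zero_seg hM ha hvw
    have hb0 : b 0 ≠ a 0 := by
      intro h
      exact hbne (by rw [← pt2_eta b, h, hb1, pt2_eta])
    have hc1 : cc 1 ≠ a 1 := by
      intro h
      exact hcne (by rw [← pt2_eta cc, h, hc0, pt2_eta])
    set p : ℕ → EucR 2 := fun j => if j = 0 then b else if j = 1 then a else cc with hp
    have hp0 : p 0 = b := by simp [hp]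
    have hp1 : p 1 = a := by simp [hp]
    have hp2 : p 2 = cc := by simp [hp]
    have hpath : IsOrthPathIn M p 2 := by
      intro k hk
      interval_cases k
      · rw [hp0, show (0:ℕ) + 1 = 1 from rfl, hp1]
        constructor
        · refine ⟨0, fun j hj => ?_⟩
          rcases fin2cases j with rfl | rfl
          · exact absurd rfl hj
          · exact hb1
        · rw [segment_symm]
          exact hbseg
      · rw [hp1, show (1:ℕ) + 1 = 2 from rfl, hp2]
        constructor
        · refine ⟨1, fun j hj => ?_⟩
          rcases fin2cases j with rfl | rfl
          · exact hc0.symm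
          · exact absurd rfl hj
        · exact hcseg
    have hstair : IsStaircaseIn M p 2 := by
      refine ⟨hpath, ?_⟩
      intro k hk l hl i hik hil
      interval_cases k <;> interval_cases l
      · exact mul_self_nonneg _
      · exfalso
        rcases fin2cases i with rfl | rfl
        · have := hil 1 (by decide)
          rw [hp1, show (1:ℕ) + 1 = 2 from rfl, hp2] at this
          exact hc1 this.symm
        · have := hik 0 (by decide)
          rw [hp0, show (0:ℕ) + 1 = 1 from rfl, hp1] at this
          exact hb0 this
      · exfalso
        rcases fin2cases i with rfl | rfl
        · have := hik 1 (by decide)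
          rw [hp1, show (1:ℕ) + 1 = 2 from rfl, hp2] at this
          exact hc1 this.symm
        · have := hil 0 (by decide)
          rw [hp0, show (0:ℕ) + 1 = 1 from rfl, hp1] at this
          exact hb0 this
      · exact mul_self_nonneg _
    have hmem : a ∈ ⋃ k ∈ Set.Iio 2, segment ℝ (p k) (p (k + 1)) := by
      simp only [Set.mem_iUnion, Set.mem_Iio, exists_prop]
      refine ⟨0, by norm_num, ?_⟩
      rw [hp0, show (0:ℕ) + 1 = 1 from rfl, hp1]
      exact right_mem_segment ℝ b a
    rcases hSE.2 2 p hstair hmem with h | h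
    · rw [hp0] at h
      exact hbne h.symm
    · rw [hp2] at h
      exact hcne h.symm
  · rintro (h | h)
    · have hsing := hw_zero_slice hM ha h
      rcases halfplane_gen hcl hconn.isPreconnected 1 hsing with hhalf | hhalf
      · exact ⟨ha, stair_endpoint 1 (-1) (by norm_num) hsing
          (fun z hz => by have := hhalf z hz; linarith)⟩
      · exact ⟨ha, stair_endpoint 1 1 (by norm_num) hsing
          (fun z hz => by have := hhalf z hz; linarith)⟩
    · have hsing := vw_zero_slice hM ha h
      rcases halfplane_gen hcl hconn.isPreconnected 0 hsing with hhalf | hhalf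
      · exact ⟨ha, stair_endpoint 0 (-1) (by norm_num) hsing
          (fun z hz => by have := hhalf z hz; linarith)⟩
      · exact ⟨ha, stair_endpoint 0 1 (by norm_num) hsing
          (fun z hz => by have := hhalf z hz; linarith)⟩
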